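/- Let H be a Hilbert space with orthonormal basis {e_j}_{j∈S}, P an orthogonal projection on H, and B ⊆ S. Then the linear span of {P e_j : j ∈ B} is dense in P(H) if and only if the operator on ℓ²(B^c) with matrix (⟨(I−P)e_j, (I−P)e_i⟩)_{i,j∈B^c} is injective. -/

import Mathlib

open scoped InnerProductSpace ENNReal
open Classical
set_option linter.unusedSectionVars false

noncomputable section

namespace DenseSpanAux

variable {S : Type*} [DecidableEq S] (B : Set S)

/-- extension by zero of a function on `Bᶜ` to a function on `S`. -/
def extFun (c : lp (fun _ : ↥Bᶜ => ℂ) 2) : ∀ _ : S, ℂ :=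
  fun s => if h : s ∈ Bᶜ then c ⟨s, h⟩ else 0

lemma extFun_comp (c : lp (fun _ : ↥Bᶜ => ℂ) 2) :
    (fun j : ↥Bᶜ => extFun B c (j : S)) = fun j => c j := by
  funext j
  simp only [extFun, dif_pos j.2]

lemma memℓp_extFun (c : lp (fun _ : ↥Bᶜ => ℂ) 2) : Memℓp (extFun B c) 2 := by
  have hp : (0:ℝ) < (2 : ℝ≥0∞).toReal := by norm_num
  rw [memℓp_gen_iff hp]
  have hc : Summable fun j : ↥Bᶜ => ‖c j‖ ^ (2 : ℝ≥0∞).toReal := by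
    have := lp.memℓp c
    rwa [memℓp_gen_iff hp] at this
  have h2 : Summable ((Bᶜ).indicator fun s => ‖extFun B c s‖ ^ (2 : ℝ≥0∞).toReal) := by
    rw [← summable_subtype_iff_indicator]
    have : ((fun s => ‖extFun B c s‖ ^ (2 : ℝ≥0∞).toReal) ∘ ((↑) : ↥Bᶜ → S))
        = fun j : ↥Bᶜ => ‖c j‖ ^ (2 : ℝ≥0∞).toReal := by
      funext j
      simp only [Function.comp_apply, extFun, dif_pos j.2]
    rwa [this]
  have h3 : (fun s => ‖extFun B c s‖ ^ (2 : ℝ≥0∞).toReal)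
      = (Bᶜ).indicator fun s => ‖extFun B c s‖ ^ (2 : ℝ≥0∞).toReal := by
    funext s
    by_cases h : s ∈ Bᶜ
    · rw [Set.indicator_of_mem h]
    · rw [Set.indicator_of_notMem h]
      simp only [extFun, dif_neg h, norm_zero]
      exact Real.zero_rpow (by norm_num)
  rw [h3]
  exact h2

/-- Extension by zero as a linear map. -/
def extL : lp (fun _ : ↥Bᶜ => ℂ) 2 →ₗ[ℂ] lp (fun _ : S => ℂ) 2 where
  toFun c := ⟨extFun B c, memℓp_extFun B c⟩
  map_add' c d := by
    apply lp.ext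
    funext s
    simp only [lp.coeFn_add, Pi.add_apply]
    by_cases h : s ∈ Bᶜ
    · simp only [extFun, dif_pos h, lp.coeFn_add, Pi.add_apply]
    · simp only [extFun, dif_neg h]
      norm_num
  map_smul' a c := by
    apply lp.ext
    funext s
    simp only [RingHom.id_apply, lp.coeFn_smul, Pi.smul_apply]
    by_cases h : s ∈ Bᶜ
    · simp only [extFun, dif_pos h, lp.coeFn_smul, Pi.smul_apply]
    · simp only [extFun, dif_neg h, smul_zero]

lemma extL_apply (c : lp (fun _ : ↥Bᶜ => ℂ) 2) (s : S) :
    (extL B c : ∀ _ : S, ℂ) s = extFun B c s := rfl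

/-- Extension by zero as a linear isometry. -/
def extLi : lp (fun _ : ↥Bᶜ => ℂ) 2 →ₗᵢ[ℂ] lp (fun _ : S => ℂ) 2 where
  toLinearMap := extL B
  norm_map' c := by
    have hp : (0:ℝ) < (2 : ℝ≥0∞).toReal := by norm_num
    have h2 := lp.hasSum_norm hp c
    have h3 : HasSum (fun j : ↥Bᶜ => ‖c j‖ ^ (2 : ℝ≥0∞).toReal)
        (‖extL B c‖ ^ (2 : ℝ≥0∞).toReal) := by
      have h4 : HasSum ((Bᶜ).indicator fun s => ‖(extL B c : ∀ _ : S, ℂ) s‖ ^ (2 : ℝ≥0∞).toReal)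
          (‖extL B c‖ ^ (2 : ℝ≥0∞).toReal) := by
        have h5 : (fun s => ‖(extL B c : ∀ _ : S, ℂ) s‖ ^ (2 : ℝ≥0∞).toReal)
            = (Bᶜ).indicator fun s => ‖(extL B c : ∀ _ : S, ℂ) s‖ ^ (2 : ℝ≥0∞).toReal := by
          funext s
          by_cases h : s ∈ Bᶜ
          · rw [Set.indicator_of_mem h]
          · rw [Set.indicator_of_notMem h, extL_apply]
            simp only [extFun, dif_neg h, norm_zero]
            exact Real.zero_rpow (by norm_num)
        rw [← h5]
        exact lp.hasSum_norm hp _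
      rw [← hasSum_subtype_iff_indicator] at h4
      have h6 : ((fun s => ‖(extL B c : ∀ _ : S, ℂ) s‖ ^ (2 : ℝ≥0∞).toReal) ∘ ((↑) : ↥Bᶜ → S))
          = fun j : ↥Bᶜ => ‖c j‖ ^ (2 : ℝ≥0∞).toReal := by
        funext j
        simp only [Function.comp_apply, extL_apply, extFun, dif_pos j.2]
      rwa [h6] at h4
    have h7 : ‖extL B c‖ ^ (2 : ℝ≥0∞).toReal = ‖c‖ ^ (2 : ℝ≥0∞).toReal := h3.unique h2
    have h8 := congrArg (fun t : ℝ => t ^ ((2 : ℝ≥0∞).toReal)⁻¹) h7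
    have ht : (2 : ℝ≥0∞).toReal * ((2 : ℝ≥0∞).toReal)⁻¹ = 1 := mul_inv_cancel₀ (ne_of_gt hp)
    rw [← Real.rpow_mul (norm_nonneg _), ← Real.rpow_mul (norm_nonneg _), ht,
      Real.rpow_one, Real.rpow_one] at h8
    exact h8

lemma extLi_single (j : ↥Bᶜ) :
    extLi B (lp.single 2 j (1:ℂ)) = lp.single 2 (j : S) (1:ℂ) := by
  apply lp.ext
  funext s
  have hL : (extLi B (lp.single 2 j (1:ℂ)) : ∀ _ : S, ℂ) s
      = extFun B (lp.single 2 j (1:ℂ)) s := rfl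
  rw [hL]
  by_cases h : s ∈ Bᶜ
  · simp only [extFun, dif_pos h]
    by_cases hj : s = (j : S)
    · have h1 : (⟨s, h⟩ : ↥Bᶜ) = j := Subtype.ext hj
      rw [h1, lp.single_apply_self, hj, lp.single_apply_self]
    · rw [lp.single_apply_ne _ _ _ (fun hc => hj (congrArg Subtype.val hc)),
        lp.single_apply_ne _ _ _ hj]
  · have hj : s ≠ (j : S) := fun hc => h (hc ▸ j.2)
    simp only [extFun, dif_neg h]
    rw [lp.single_apply_ne _ _ _ hj]

lemma clm_eq_zero_of_single (g : lp (fun _ : ↥Bᶜ => ℂ) 2 →L[ℂ] ℂ)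
    (h : ∀ j : ↥Bᶜ, g (lp.single 2 j 1) = 0) (d : lp (fun _ : ↥Bᶜ => ℂ) 2) : g d = 0 := by
  have hd : HasSum (fun j : ↥Bᶜ => lp.single 2 j (d j)) d :=
    lp.hasSum_single ENNReal.ofNat_ne_top d
  have h2 := hd.mapL g
  have h0 : (fun j : ↥Bᶜ => g (lp.single 2 j (d j))) = fun _ => (0:ℂ) := by
    funext j
    have h1 : d j • (lp.single 2 j (1:ℂ) : lp (fun _ : ↥Bᶜ => ℂ) 2) = lp.single 2 j (d j) := by
      rw [← lp.single_smul, smul_eq_mul, mul_one]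
    rw [← h1, map_smul, h j, smul_zero]
  rw [h0] at h2
  exact h2.unique hasSum_zero

end DenseSpanAux

/-- If `{e j}_{j ∈ S}` is an orthonormal basis of `H`, `P` an orthogonal
projection and `B ⊆ S`, then the span of `{P e j : j ∈ B}` is dense in `P(H)` iff the
operator on `ℓ²(Bᶜ)` with matrix `(⟪(I-P) e j, (I-P) e i⟫)_{i,j ∈ Bᶜ}` is injective. -/
theorem dense_span_iff_injective
    {S : Type*} [DecidableEq S] {H : Type*} [NormedAddCommGroup H]
    [InnerProductSpace ℂ H] [CompleteSpace H]
    (e : HilbertBasis S ℂ H)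
    (P : H →L[ℂ] H) (hPidem : IsIdempotentElem P) (hPsa : IsSelfAdjoint P)
    (B : Set S)
    (T : lp (fun _ : ↥Bᶜ => ℂ) 2 →L[ℂ] lp (fun _ : ↥Bᶜ => ℂ) 2)
    (hT : ∀ i j : ↥Bᶜ, ⟪T (lp.single 2 j 1), lp.single 2 i 1⟫_ℂ
        = ⟪((1 : H →L[ℂ] H) - P) (e (j : S)), ((1 : H →L[ℂ] H) - P) (e (i : S))⟫_ℂ) :
    (Submodule.span ℂ ((fun j => P (e j)) '' B)).topologicalClosure
        = LinearMap.range (P : H →ₗ[ℂ] H) ↔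
      Function.Injective T := by
  classical
  set Q : H →L[ℂ] H := (1 : H →L[ℂ] H) - P with hQdef
  set M : Submodule ℂ H := Submodule.span ℂ ((fun j => P (e j)) '' B) with hMdef
  set K : Submodule ℂ H := LinearMap.range (P : H →ₗ[ℂ] H) with hKdef
  have hQapp : ∀ x : H, Q x = x - P x := fun x => by
    rw [hQdef]; simp [ContinuousLinearMap.sub_apply]
  have hPP : ∀ x : H, P (P x) = P x := fun x => by
    calc P (P x) = (P * P) x := rfl
      _ = P x := by rw [hPidem]
  have hQzero : ∀ x : H, Q x = 0 → P x = x := fun x h => by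
    have h2 := hQapp x
    rw [h] at h2
    exact (sub_eq_zero.mp h2.symm).symm
  have hmemK : ∀ x : H, x ∈ K ↔ Q x = 0 := by
    intro x
    constructor
    · rintro ⟨y, rfl⟩
      show Q (P y) = 0
      rw [hQapp, hPP, sub_self]
    · intro h
      exact ⟨x, hQzero x h⟩
  have hsym : ∀ x y : H, ⟪P x, y⟫_ℂ = ⟪x, P y⟫_ℂ := fun x y => hPsa.isSymmetric x y
  have hKclosed : IsClosed (K : Set H) := by
    have h1 : (K : Set H) = Q ⁻¹' {0} := by
      ext x
      simpa using hmemK x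
    rw [h1]
    exact IsClosed.preimage Q.continuous isClosed_singleton
  have hMK : M ≤ K := by
    rw [hMdef, Submodule.span_le]
    rintro _ ⟨j, hj, rfl⟩
    exact ⟨e j, rfl⟩
  set U : lp (fun _ : ↥Bᶜ => ℂ) 2 →ₗᵢ[ℂ] H :=
    (e.repr.symm.toLinearIsometry).comp (DenseSpanAux.extLi B) with hUdef
  have hUapp : ∀ c, U c = e.repr.symm (DenseSpanAux.extLi B c) := fun c => rfl
  have hreprU : ∀ c, e.repr (U c) = DenseSpanAux.extLi B c := fun c => by
    rw [hUapp, LinearIsometryEquiv.apply_symm_apply]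
  have hUsingle : ∀ j : ↥Bᶜ, U (lp.single 2 j 1) = e (j : S) := fun j => by
    rw [hUapp, DenseSpanAux.extLi_single, e.repr_symm_single]
  set V : lp (fun _ : ↥Bᶜ => ℂ) 2 →L[ℂ] H := Q.comp U.toContinuousLinearMap with hVdef
  have hVapp : ∀ c, V c = Q (U c) := fun c => rfl
  have keyD : (M.topologicalClosure = K) ↔
      ∀ x : H, Q x = 0 → (∀ j ∈ B, ⟪e j, x⟫_ℂ = 0) → x = 0 := by
    constructor
    · intro hcl x hQx hB
      have hxK : x ∈ K := (hmemK x).mpr hQx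
      have hPx : P x = x := hQzero x hQx
      have hMker : M ≤ LinearMap.ker (innerSL ℂ x : H →ₗ[ℂ] ℂ) := by
        rw [hMdef, Submodule.span_le]
        rintro _ ⟨j, hj, rfl⟩
        have h1 : ⟪P (e j), x⟫_ℂ = 0 := by
          rw [hsym, hPx]
          exact hB j hj
        simp only [SetLike.mem_coe, LinearMap.mem_ker, ContinuousLinearMap.coe_coe,
          innerSL_apply_apply]
        rw [← inner_conj_symm, h1, map_zero]
      have hclker : M.topologicalClosure ≤ LinearMap.ker (innerSL ℂ x : H →ₗ[ℂ] ℂ) :=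
        M.topologicalClosure_minimal hMker (ContinuousLinearMap.isClosed_ker _)
      have hxcl : x ∈ M.topologicalClosure := by rw [hcl]; exact hxK
      have h2 := hclker hxcl
      simp only [LinearMap.mem_ker, ContinuousLinearMap.coe_coe, innerSL_apply_apply] at h2
      exact inner_self_eq_zero.mp h2
    · intro hD
      refine le_antisymm (M.topologicalClosure_minimal hMK hKclosed) ?_
      intro x hx
      set N := M.topologicalClosure with hNdef
      haveI : CompleteSpace N := (Submodule.isClosed_topologicalClosure M).completeSpace_coe
      obtain ⟨y, hy, z, hz, hxyz⟩ := N.exists_add_mem_mem_orthogonal x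
      have hNK : N ≤ K := M.topologicalClosure_minimal hMK hKclosed
      have hzK : z ∈ K := by
        have h3 : z = x - y := by rw [hxyz]; abel
        rw [h3]; exact K.sub_mem hx (hNK hy)
      have hzP : P z = z := hQzero z ((hmemK z).mp hzK)
      have hz0 : z = 0 := by
        apply hD z ((hmemK z).mp hzK)
        intro j hj
        have hgen : P (e j) ∈ M := Submodule.subset_span ⟨j, hj, rfl⟩
        have h1 : ⟪P (e j), z⟫_ℂ = 0 :=
          Submodule.inner_right_of_mem_orthogonal (M.le_topologicalClosure hgen) hz
        rw [← hzP, ← hsym]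
        exact h1
      rw [hxyz, hz0, add_zero]
      exact hy
  have hVsingle : ∀ j : ↥Bᶜ, V (lp.single 2 j 1) = Q (e (j : S)) := fun j => by
    rw [hVapp, hUsingle]
  have key : ∀ c d, ⟪T c, d⟫_ℂ = ⟪V c, V d⟫_ℂ := by
    have step1 : ∀ (j : ↥Bᶜ) (d), ⟪T (lp.single 2 j 1), d⟫_ℂ
        = ⟪V (lp.single 2 j 1), V d⟫_ℂ := by
      intro j d
      have h0 : ∀ i : ↥Bᶜ,
          (innerSL ℂ (T (lp.single 2 j 1)) - (innerSL ℂ (V (lp.single 2 j 1))).comp V)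
            (lp.single 2 i 1) = 0 := by
        intro i
        simp only [ContinuousLinearMap.sub_apply, ContinuousLinearMap.comp_apply, innerSL_apply_apply]
        rw [hVsingle, hVsingle, hT i j, sub_self]
      have h2 := DenseSpanAux.clm_eq_zero_of_single B _ h0 d
      simp only [ContinuousLinearMap.sub_apply, ContinuousLinearMap.comp_apply, innerSL_apply_apply,
        sub_eq_zero] at h2
      exact h2
    intro c d
    have h0 : ∀ j : ↥Bᶜ,
        ((innerSL ℂ d).comp T - (innerSL ℂ (V d)).comp V) (lp.single 2 j 1) = 0 := by
      intro j
      simp only [ContinuousLinearMap.sub_apply, ContinuousLinearMap.comp_apply, innerSL_apply_apply]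
      rw [sub_eq_zero, ← inner_conj_symm d (T (lp.single 2 j 1)), step1 j d, inner_conj_symm]
    have h2 := DenseSpanAux.clm_eq_zero_of_single B _ h0 c
    simp only [ContinuousLinearMap.sub_apply, ContinuousLinearMap.comp_apply, innerSL_apply_apply,
      sub_eq_zero] at h2
    calc ⟪T c, d⟫_ℂ = starRingEnd ℂ ⟪d, T c⟫_ℂ := (inner_conj_symm _ _).symm
      _ = starRingEnd ℂ ⟪V d, V c⟫_ℂ := by rw [h2]
      _ = ⟪V c, V d⟫_ℂ := inner_conj_symm _ _
  have hTV : ∀ c, T c = 0 ↔ V c = 0 := by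
    intro c
    constructor
    · intro h
      have h2 := key c c
      rw [h, inner_zero_left] at h2
      exact inner_self_eq_zero.mp h2.symm
    · intro h
      have h2 := key c (T c)
      rw [h, inner_zero_left] at h2
      exact inner_self_eq_zero.mp h2
  have hTinj : Function.Injective T ↔ ∀ c, T c = 0 → c = 0 := by
    constructor
    · intro h c hc
      exact h (by rw [hc, map_zero])
    · intro h a b hab
      have h3 : T (a - b) = 0 := by rw [map_sub, hab, sub_self]
      exact sub_eq_zero.mp (h _ h3)
  rw [keyD, hTinj]
  constructor
  · intro hD c hc
    have hVc : V c = 0 := (hTV c).mp hc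
    have hQx : Q (U c) = 0 := by rw [← hVapp]; exact hVc
    have hBcoeff : ∀ j ∈ B, ⟪e j, (U c : H)⟫_ℂ = 0 := by
      intro j hj
      rw [← e.repr_apply_apply, hreprU]
      show DenseSpanAux.extFun B c j = 0
      simp [DenseSpanAux.extFun, hj]
    have h4 := hD (U c) hQx hBcoeff
    exact U.injective (by rw [h4, map_zero])
  · intro hinj x hQx hB
    have hmem : Memℓp (fun j : ↥Bᶜ => e.repr x (j : S)) 2 := by
      have hp : (0:ℝ) < (2 : ℝ≥0∞).toReal := by norm_num
      rw [memℓp_gen_iff hp]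
      have h5 := lp.memℓp (e.repr x)
      rw [memℓp_gen_iff hp] at h5
      exact h5.subtype _
    set c : lp (fun _ : ↥Bᶜ => ℂ) 2 := ⟨fun j : ↥Bᶜ => e.repr x (j : S), hmem⟩ with hcdef
    have hext : DenseSpanAux.extLi B c = e.repr x := by
      apply lp.ext
      funext s
      show DenseSpanAux.extFun B c s = e.repr x s
      by_cases h : s ∈ Bᶜ
      · simp only [DenseSpanAux.extFun, dif_pos h]
        rfl
      · simp only [DenseSpanAux.extFun, dif_neg h]
        have hsB : s ∈ B := Set.notMem_compl_iff.mp h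
        rw [e.repr_apply_apply]
        exact (hB s hsB).symm
    have hUc : U c = x := by
      rw [hUapp, hext, LinearIsometryEquiv.symm_apply_apply]
    have hTc : T c = 0 := by
      rw [hTV, hVapp, hUc]
      exact hQx
    have hc0 : c = 0 := hinj c hTc
    have h6 : e.repr x = 0 := by rw [← hext, hc0, map_zero]
    have h7 := congrArg e.repr.symm h6
    rwa [LinearIsometryEquiv.symm_apply_apply, map_zero] at h7
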